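/- Let x₀,…,x₇ be real numbers and set X = x₀·u₀ + x₁·u₁ + x₂·u₂ + x₃·u₃ + x₄·u₄ + x₅·u₅ + x₆·u₆ + x₇·u₇ in Cl₄. Then X·reverse(X) = (x₀²+x₁²+x₂²+x₃²+x₄²+x₅²+x₆²+x₇²)·1 + (2x₀x₇ − 2x₁x₆ − 2x₂x₅ − 2x₃x₄)·u₇; in particular X·reverse(X) has no component on u₁,…,u₆. -/
import Mathlib


open CliffordAlgebra

/-- The positive-definite quadratic form `Q₄(v) = v₀² + v₁² + v₂² + v₃²` on `ℝ⁴`. -/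
noncomputable def Q4 : QuadraticForm ℝ (Fin 4 → ℝ) :=
  QuadraticMap.weightedSumSquares ℝ (fun _ : Fin 4 => (1 : ℝ))

/-- The generators `e i` of the Clifford algebra `Cl₄ = Cl_{4,0}`. -/
noncomputable def e (i : Fin 4) : CliffordAlgebra Q4 :=
  CliffordAlgebra.ι Q4 (Pi.single i 1)

lemma Q4_single (i : Fin 4) : Q4 (Pi.single i 1) = 1 := by
  fin_cases i <;>
    simp [Q4, QuadraticMap.weightedSumSquares_apply, Fin.sum_univ_four, Pi.single_apply]

lemma esq (i : Fin 4) : e i * e i = 1 := by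
  rw [e, ι_sq_scalar, Q4_single, map_one]

lemma eanti (i j : Fin 4) (h : i ≠ j) : e j * e i = -(e i * e j) := by
  apply CliffordAlgebra.ι_mul_ι_comm_of_isOrtho
  rw [QuadraticMap.isOrtho_def]
  fin_cases i <;> fin_cases j <;> first
    | exact absurd rfl h
    | (simp [Q4, QuadraticMap.weightedSumSquares_apply, Fin.sum_univ_four, Pi.single_apply])

lemma esqm (i : Fin 4) (x : CliffordAlgebra Q4) : e i * (e i * x) = x := by
  rw [← mul_assoc, esq, one_mul]

lemma eantim (i j : Fin 4) (h : i ≠ j) (x : CliffordAlgebra Q4) :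
    e j * (e i * x) = -(e i * (e j * x)) := by
  rw [← mul_assoc, eanti i j h, neg_mul, mul_assoc]

lemma s10 : e 1 * e 0 = -(e 0 * e 1) := eanti 0 1 (by decide)
lemma s20 : e 2 * e 0 = -(e 0 * e 2) := eanti 0 2 (by decide)
lemma s30 : e 3 * e 0 = -(e 0 * e 3) := eanti 0 3 (by decide)
lemma s21 : e 2 * e 1 = -(e 1 * e 2) := eanti 1 2 (by decide)
lemma s31 : e 3 * e 1 = -(e 1 * e 3) := eanti 1 3 (by decide)
lemma s32 : e 3 * e 2 = -(e 2 * e 3) := eanti 2 3 (by decide)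
lemma m10 (x) : e 1 * (e 0 * x) = -(e 0 * (e 1 * x)) := eantim 0 1 (by decide) x
lemma m20 (x) : e 2 * (e 0 * x) = -(e 0 * (e 2 * x)) := eantim 0 2 (by decide) x
lemma m30 (x) : e 3 * (e 0 * x) = -(e 0 * (e 3 * x)) := eantim 0 3 (by decide) x
lemma m21 (x) : e 2 * (e 1 * x) = -(e 1 * (e 2 * x)) := eantim 1 2 (by decide) x
lemma m31 (x) : e 3 * (e 1 * x) = -(e 1 * (e 3 * x)) := eantim 1 3 (by decide) x
lemma m32 (x) : e 3 * (e 2 * x) = -(e 2 * (e 3 * x)) := eantim 2 3 (by decide) x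

lemma rev_e (i : Fin 4) : reverse (e i) = e i := reverse_ι _

/-- `X·X†` has only a scalar part and a pseudoscalar (`u₇`) part:
`X·X† = (Σ xᵢ²)·1 + (2x₀x₇ − 2x₁x₆ − 2x₂x₅ − 2x₃x₄)·u₇`. -/
theorem mul_reverse_eq_scalar_add_pseudoscalar
    (x₀ x₁ x₂ x₃ x₄ x₅ x₆ x₇ : ℝ) :
    (x₀ • (1 : CliffordAlgebra Q4) + x₁ • (e 0 * e 1) + x₂ • (e 2 * e 0) +
      x₃ • (e 1 * e 2) + x₄ • (e 0 * e 3) + x₅ • (e 1 * e 3) + x₆ • (e 2 * e 3) +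
      x₇ • (e 0 * e 1 * e 2 * e 3)) * reverse (x₀ • (1 : CliffordAlgebra Q4) + x₁ • (e 0 * e 1) + x₂ • (e 2 * e 0) +
      x₃ • (e 1 * e 2) + x₄ • (e 0 * e 3) + x₅ • (e 1 * e 3) + x₆ • (e 2 * e 3) +
      x₇ • (e 0 * e 1 * e 2 * e 3)) =
      (x₀^2 + x₁^2 + x₂^2 + x₃^2 + x₄^2 + x₅^2 + x₆^2 + x₇^2) • (1 : CliffordAlgebra Q4) +
        (2*x₀*x₇ - 2*x₁*x₆ - 2*x₂*x₅ - 2*x₃*x₄) • (e 0 * e 1 * e 2 * e 3) := by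
  simp only [map_add, map_smul, reverse.map_mul, rev_e, reverse.map_one]
  simp only [mul_add, add_mul, smul_mul_assoc, mul_smul_comm, smul_smul, mul_one, one_mul,
    mul_assoc, esq, esqm, s10, s20, s30, s21, s31, s32, m10, m20, m30, m21, m31, m32,
    mul_neg, neg_mul, smul_neg, neg_neg]
  module
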